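/- For every natural number k ≥ 1, ∫_0^1 ln(1 + x) · (ln x)^{k−1} / x dx = (−1)^{k−1} · (k−1)! · (1 − 2^{−k}) · ζ(k+1). -/

import Mathlib

open MeasureTheory Real

private lemma expNegImage : (fun t : ℝ => Real.exp (-t)) '' Set.Ioi 0 = Set.Ioo (0:ℝ) 1 := by
  ext x
  simp only [Set.mem_image, Set.mem_Ioi, Set.mem_Ioo]
  constructor
  · rintro ⟨t, ht, rfl⟩
    exact ⟨Real.exp_pos _, Real.exp_lt_one_iff.mpr (by linarith)⟩
  · rintro ⟨h0, h1⟩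
    exact ⟨-Real.log x, by simpa using Real.log_neg h0 h1,
      by rw [neg_neg, Real.exp_log h0]⟩

private lemma expNegDeriv (t : ℝ) (s : Set ℝ) :
    HasDerivWithinAt (fun t : ℝ => Real.exp (-t)) (-Real.exp (-t)) s t := by
  have := (Real.hasDerivAt_exp (-t)).comp t (hasDerivAt_neg t)
  simpa [mul_comm, Function.comp_def] using this.hasDerivWithinAt

private lemma expNegInj : Set.InjOn (fun t : ℝ => Real.exp (-t)) (Set.Ioi 0) :=
  fun a _ b _ h => neg_injective (Real.exp_injective h)

private lemma expNegKey (n m : ℕ) (t : ℝ) :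
    |(-Real.exp (-t))| • ((Real.exp (-t)) ^ n * (Real.log (Real.exp (-t))) ^ m)
      = (-1:ℝ) ^ m * (t ^ ((m:ℝ)) * Real.exp (-(((n:ℝ)+1) * t))) := by
  have h1 : Real.exp (-t) * Real.exp (-t) ^ n = Real.exp (-(((n:ℝ)+1) * t)) := by
    rw [← Real.exp_nat_mul, ← Real.exp_add]
    congr 1
    push_cast
    ring
  rw [abs_neg, abs_of_pos (Real.exp_pos _), Real.log_exp, smul_eq_mul, neg_pow,
    Real.rpow_natCast, ← h1]
  ring

private lemma integrableOn_pow_mul_log_pow (n m : ℕ) :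
    IntegrableOn (fun x : ℝ => x ^ n * Real.log x ^ m) (Set.Ioo (0:ℝ) 1) := by
  rw [← expNegImage, integrableOn_image_iff_integrableOn_abs_deriv_smul measurableSet_Ioi
    (fun t _ => expNegDeriv t _) expNegInj]
  have base := integrableOn_rpow_mul_exp_neg_mul_rpow (s := (m:ℝ)) (p := 1) (b := (n:ℝ)+1)
    (lt_of_lt_of_le neg_one_lt_zero (Nat.cast_nonneg m)) zero_lt_one (by positivity)
  have base2 : IntegrableOn (fun t : ℝ => (-1:ℝ)^m * (t ^ ((m:ℝ)) * Real.exp (-(((n:ℝ)+1) * t))))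
      (Set.Ioi 0) := by
    have e : (fun x : ℝ => (-1:ℝ)^m * (x ^ ((m:ℝ)) * Real.exp (-((n:ℝ)+1) * x ^ (1:ℝ))))
        = fun t : ℝ => (-1:ℝ)^m * (t ^ ((m:ℝ)) * Real.exp (-(((n:ℝ)+1) * t))) := by
      funext x
      rw [Real.rpow_one, neg_mul]
    have h2 : IntegrableOn
        (fun x : ℝ => (-1:ℝ)^m * (x ^ ((m:ℝ)) * Real.exp (-((n:ℝ)+1) * x ^ (1:ℝ))))
        (Set.Ioi 0) := by
      have := base.const_mul ((-1:ℝ)^m)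
      simpa [mul_assoc, IntegrableOn] using this
    rwa [e] at h2
  exact IntegrableOn.congr_fun base2 (fun t _ => (expNegKey n m t).symm) measurableSet_Ioi

private lemma integral_pow_mul_log_pow (n m : ℕ) :
    ∫ x in Set.Ioo (0:ℝ) 1, x ^ n * Real.log x ^ m
      = (-1:ℝ) ^ m * (m.factorial : ℝ) / ((n:ℝ)+1) ^ (m+1) := by
  rw [← expNegImage, integral_image_eq_integral_abs_deriv_smul measurableSet_Ioi
    (fun t _ => expNegDeriv t _) expNegInj]
  simp_rw [expNegKey n m]
  rw [MeasureTheory.integral_const_mul]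
  have h := Real.integral_rpow_mul_exp_neg_mul_Ioi (a := (m:ℝ)+1) (r := (n:ℝ)+1)
    (by positivity) (by positivity)
  simp only [add_sub_cancel_right] at h
  rw [h, Real.Gamma_nat_eq_factorial,
    show ((m:ℝ)+1) = ((m+1 : ℕ) : ℝ) by push_cast; ring, Real.rpow_natCast]
  have hn : ((n:ℝ)+1) ≠ 0 := by positivity
  field_simp
  rw [← mul_pow, one_div_mul_cancel hn, one_pow]

private lemma integral_pow_mul_neg_log_pow (n m : ℕ) :
    ∫ x in Set.Ioo (0:ℝ) 1, x ^ n * (-Real.log x) ^ m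
      = (m.factorial : ℝ) / ((n:ℝ)+1) ^ (m+1) := by
  have e : ∀ x : ℝ, x ^ n * (-Real.log x) ^ m = (-1:ℝ)^m * (x ^ n * Real.log x ^ m) := by
    intro x; rw [neg_pow]; ring
  simp_rw [e]
  rw [MeasureTheory.integral_const_mul, integral_pow_mul_log_pow, ← mul_div_assoc,
    ← mul_assoc, ← mul_pow]
  norm_num

private lemma summable_aux (p : ℕ) (hp : 2 ≤ p) :
    Summable (fun n : ℕ => (1:ℝ) / ((n:ℝ)+1) ^ p) := by
  have := (summable_nat_add_iff 1).mpr (Real.summable_one_div_nat_pow.mpr hp)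
  exact this.congr (fun n => by push_cast; ring)

private lemma alt_tsum (k : ℕ) (hk : 1 ≤ k) :
    ∑' n : ℕ, (-1:ℝ) ^ n / ((n:ℝ)+1) ^ (k+1)
      = (1 - 2 ^ (-(k:ℝ))) * ∑' n : ℕ, (1:ℝ) / ((n:ℝ)+1) ^ (k+1) := by
  set b : ℕ → ℝ := fun n => (1:ℝ) / ((n:ℝ)+1) ^ (k+1) with hb
  set a : ℕ → ℝ := fun n => (-1:ℝ) ^ n / ((n:ℝ)+1) ^ (k+1) with ha
  have hbs : Summable b := summable_aux (k+1) (by omega)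
  have has : Summable a := by
    refine hbs.of_norm_bounded (fun n => ?_)
    simp only [a, b, norm_div, norm_pow, norm_neg, norm_one, one_pow]
    rw [Real.norm_of_nonneg (by positivity)]
  have hae : Summable (fun j => a (2*j)) := has.comp_injective (fun x y => by omega)
  have hao : Summable (fun j => a (2*j+1)) := has.comp_injective (fun x y => by omega)
  have hbe : Summable (fun j => b (2*j)) := hbs.comp_injective (fun x y => by omega)
  have hbo : Summable (fun j => b (2*j+1)) := hbs.comp_injective (fun x y => by omega)
  have heq : ∀ j, a (2*j) = b (2*j) := by
    intro j; simp only [a, b, pow_mul, neg_one_sq, one_pow]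
  have hoq : ∀ j, a (2*j+1) = -(b (2*j+1)) := by
    intro j
    simp only [a, b]
    rw [pow_succ, pow_mul]
    norm_num
    rw [neg_div, one_div]
  have hodd : ∑' j, b (2*j+1) = ((2:ℝ) ^ (k+1))⁻¹ * ∑' n, b n := by
    rw [← tsum_mul_left]
    congr 1; funext j
    have : ((2*j+1 : ℕ):ℝ) + 1 = 2 * ((j:ℝ)+1) := by push_cast; ring
    simp only [b, this, mul_pow]
    rw [inv_eq_one_div, div_mul_div_comm, one_mul]
  have hsplit_a : (∑' j, a (2*j)) + ∑' j, a (2*j+1) = ∑' n, a n :=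
    tsum_even_add_odd hae hao
  have hsplit_b : (∑' j, b (2*j)) + ∑' j, b (2*j+1) = ∑' n, b n :=
    tsum_even_add_odd hbe hbo
  have h2 : (2:ℝ) ^ (-(k:ℝ)) = ((2:ℝ) ^ k)⁻¹ := by
    rw [Real.rpow_neg (by norm_num), Real.rpow_natCast]
  simp only [heq] at hsplit_a
  simp only [hoq, tsum_neg] at hsplit_a
  have : ∑' n, a n = ∑' n, b n - 2 * ∑' j, b (2*j+1) := by
    rw [← hsplit_a, ← hsplit_b]; ring
  rw [this, hodd, h2]
  have h2k : ((2:ℝ)^k) ≠ 0 := by positivity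
  rw [pow_succ]
  field_simp

theorem integral_log_one_add_mul_pow_log (k : ℕ) (hk : 1 ≤ k) :
    ∫ x in Set.Ioo (0 : ℝ) 1, Real.log (1 + x) * (Real.log x) ^ (k - 1) / x
      = (-1 : ℝ) ^ (k - 1) * ((k - 1).factorial : ℝ) * (1 - 2 ^ (-(k : ℝ))) *
        ∑' n : ℕ, (1 : ℝ) / (n + 1) ^ (k + 1) := by
  obtain ⟨m, rfl⟩ : ∃ m, k = m + 1 := ⟨k - 1, (Nat.succ_pred_eq_of_pos hk).symm⟩
  simp only [Nat.add_sub_cancel]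
  set F : ℕ → ℝ → ℝ := fun n x =>
    ((-1:ℝ) ^ n / ((n:ℝ)+1)) * (x ^ (n+1) * (Real.log x ^ m / x)) with hF
  -- pointwise series expansion
  have hpt : ∀ x ∈ Set.Ioo (0:ℝ) 1,
      Real.log (1 + x) * Real.log x ^ m / x = ∑' n, F n x := by
    rintro x ⟨hx0, hx1⟩
    have habs : |(-x)| < 1 := by rw [abs_neg, abs_of_pos hx0]; exact hx1
    have hs := (Real.hasSum_pow_div_log_of_abs_lt_one habs).neg
    rw [sub_neg_eq_add, neg_neg] at hs
    have hs2 := hs.mul_right (Real.log x ^ m / x)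
    have : (fun n : ℕ => -((-x) ^ (n+1) / ((n:ℝ)+1)) * (Real.log x ^ m / x)) = fun n => F n x := by
      funext n
      simp only [F]
      rw [neg_pow, pow_succ]
      ring
    rw [this] at hs2
    rw [mul_div_assoc]
    exact hs2.tsum_eq.symm
  rw [MeasureTheory.setIntegral_congr_fun measurableSet_Ioo hpt]
  -- each F n is integrable with computable integral
  have hFeq : ∀ n : ℕ, ∀ x ∈ Set.Ioo (0:ℝ) 1,
      F n x = ((-1:ℝ) ^ n / ((n:ℝ)+1)) * (x ^ n * Real.log x ^ m) := by
    rintro n x ⟨hx0, _⟩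
    simp only [F]
    rw [pow_succ]
    field_simp
  have hFint : ∀ n : ℕ, IntegrableOn (F n) (Set.Ioo (0:ℝ) 1) := by
    intro n
    have h1 : IntegrableOn (fun x : ℝ => ((-1:ℝ) ^ n / ((n:ℝ)+1)) * (x ^ n * Real.log x ^ m))
        (Set.Ioo (0:ℝ) 1) := (integrableOn_pow_mul_log_pow n m).const_mul _
    exact IntegrableOn.congr_fun h1 (fun x hx => (hFeq n x hx).symm) measurableSet_Ioo
  have hFval : ∀ n : ℕ, ∫ x in Set.Ioo (0:ℝ) 1, F n x
      = (-1:ℝ) ^ m * (m.factorial : ℝ) * ((-1:ℝ) ^ n / ((n:ℝ)+1) ^ (m+2)) := by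
    intro n
    rw [MeasureTheory.setIntegral_congr_fun measurableSet_Ioo (hFeq n),
      MeasureTheory.integral_const_mul, integral_pow_mul_log_pow]
    have : ((n:ℝ)+1) ≠ 0 := by positivity
    field_simp
    ring
  have hFnorm : ∀ n : ℕ, ∫ x in Set.Ioo (0:ℝ) 1, ‖F n x‖
      = (m.factorial : ℝ) * ((1:ℝ) / ((n:ℝ)+1) ^ (m+2)) := by
    intro n
    have : ∀ x ∈ Set.Ioo (0:ℝ) 1, ‖F n x‖
        = ((1:ℝ)/((n:ℝ)+1)) * (x ^ n * (-Real.log x) ^ m) := by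
      rintro n' ⟨hx0, hx1⟩
      rw [hFeq _ _ ⟨hx0, hx1⟩, Real.norm_eq_abs, abs_mul, abs_div, abs_pow, abs_neg, abs_one,
        one_pow, abs_of_pos (by positivity : (0:ℝ) < (n:ℝ)+1), abs_mul, abs_pow,
        abs_of_pos hx0, abs_pow, abs_of_nonpos (Real.log_nonpos hx0.le hx1.le), one_div]
    rw [MeasureTheory.setIntegral_congr_fun measurableSet_Ioo this,
      MeasureTheory.integral_const_mul, integral_pow_mul_neg_log_pow]
    rw [mul_one_div, one_div_mul_eq_div, div_div, ← pow_succ]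
  -- interchange sum and integral
  rw [← MeasureTheory.integral_tsum_of_summable_integral_norm hFint ?_]
  · simp_rw [hFval]
    rw [tsum_mul_left, show m + 2 = (m+1) + 1 from rfl, alt_tsum (m+1) (by omega)]
    ring
  · simp_rw [hFnorm]
    exact (summable_aux (m+2) (by omega)).mul_left _
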